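/- Let (X,μ) and (Y,ν) be finite measure spaces, f ∈ L¹(X,ℝⁿ), g ∈ L¹(Y,ℝⁿ), h ∈ L¹(X,(0,∞)), k ∈ L¹(Y,(0,∞)). Then the following are equivalent: (1) there exists a stochastic operator S : L¹(Y,ν) → L¹(X,μ) with S g_i = f_i for all i and S k = h; (2) letting α = h dμ and β = k dν, there exists a doubly stochastic operator D : L¹(Y,β) → L¹(X,α) with D(g_i/k) = f_i/h for all i. -/

import Mathlib

open MeasureTheory
open scoped NNReal ENNReal

section Aux

variable {Z : Type*} [MeasurableSpace Z] (ρ : Measure Z) (w : Z → ℝ)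

/-- abbreviation for the weighted measure -/
noncomputable def wdMeas : Measure Z := ρ.withDensity fun z => ENNReal.ofReal (w z)

variable {ρ w}

lemma wd_ac : (ρ.withDensity fun z => ENNReal.ofReal (w z)) ≪ ρ :=
  withDensity_absolutelyContinuous _ _

lemma ac_wd (hm : Measurable w) (hpos : ∀ z, 0 < w z) :
    ρ ≪ ρ.withDensity fun z => ENNReal.ofReal (w z) :=
  withDensity_absolutelyContinuous' hm.ennreal_ofReal.aemeasurable
    (Filter.Eventually.of_forall fun z => by
      simp [ENNReal.ofReal_eq_zero, not_le, hpos z])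

lemma wd_ae_iff (hm : Measurable w) (hpos : ∀ z, 0 < w z) {p : Z → Prop} :
    (∀ᵐ z ∂(ρ.withDensity fun z => ENNReal.ofReal (w z)), p z) ↔ ∀ᵐ z ∂ρ, p z :=
  ⟨fun hp => (ac_wd hm hpos).ae_le hp, fun hp => (wd_ac (ρ := ρ) (w := w)).ae_le hp⟩

lemma integral_wd (hm : Measurable w) (hpos : ∀ z, 0 < w z) (g : Z → ℝ) :
    ∫ z, g z ∂(ρ.withDensity fun z => ENNReal.ofReal (w z)) = ∫ z, w z * g z ∂ρ := by
  have hρ : (ρ.withDensity fun z => ENNReal.ofReal (w z))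
      = ρ.withDensity fun z => ((Real.toNNReal (w z) : ℝ≥0) : ℝ≥0∞) := rfl
  rw [hρ, integral_withDensity_eq_integral_smul hm.real_toNNReal]
  refine integral_congr_ae (Filter.Eventually.of_forall fun z => ?_)
  show (Real.toNNReal (w z) : ℝ≥0) • g z = w z * g z
  rw [NNReal.smul_def, smul_eq_mul, Real.coe_toNNReal _ (hpos z).le]

lemma memL1_div (hm : Measurable w) (hpos : ∀ z, 0 < w z) (v : Lp ℝ 1 ρ) :
    MemLp (fun z => v z / w z) 1 (ρ.withDensity fun z => ENNReal.ofReal (w z)) := by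
  rw [memLp_one_iff_integrable,
    integrable_withDensity_iff hm.ennreal_ofReal
      (Filter.Eventually.of_forall fun z => ENNReal.ofReal_lt_top)]
  have hv : Integrable (fun z => v z) ρ := memLp_one_iff_integrable.1 (Lp.memLp v)
  refine hv.congr (Filter.Eventually.of_forall fun z => ?_)
  show (v : Z → ℝ) z = (v : Z → ℝ) z / w z * (ENNReal.ofReal (w z)).toReal
  rw [ENNReal.toReal_ofReal (hpos z).le, div_mul_cancel₀ _ (hpos z).ne']

lemma memL1_mul (hm : Measurable w) (hpos : ∀ z, 0 < w z)
    (u : Lp ℝ 1 (ρ.withDensity fun z => ENNReal.ofReal (w z))) :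
    MemLp (fun z => w z * u z) 1 ρ := by
  rw [memLp_one_iff_integrable]
  have hu : Integrable (fun z => u z) (ρ.withDensity fun z => ENNReal.ofReal (w z)) :=
    memLp_one_iff_integrable.1 (Lp.memLp u)
  rw [integrable_withDensity_iff hm.ennreal_ofReal
      (Filter.Eventually.of_forall fun z => ENNReal.ofReal_lt_top)] at hu
  refine hu.congr (Filter.Eventually.of_forall fun z => ?_)
  show (u : Z → ℝ) z * (ENNReal.ofReal (w z)).toReal = w z * (u : Z → ℝ) z
  rw [ENNReal.toReal_ofReal (hpos z).le, mul_comm]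

/-- Division by a positive weight: `L¹(ρ) → L¹(w·ρ)`. -/
noncomputable def divLM (hm : Measurable w) (hpos : ∀ z, 0 < w z) :
    Lp ℝ 1 ρ →ₗ[ℝ] Lp ℝ 1 (ρ.withDensity fun z => ENNReal.ofReal (w z)) where
  toFun v := (memL1_div hm hpos v).toLp _
  map_add' := by
    intro u v
    ext1
    filter_upwards [(memL1_div hm hpos u).coeFn_toLp, (memL1_div hm hpos v).coeFn_toLp,
      (memL1_div hm hpos (u + v)).coeFn_toLp,
      Lp.coeFn_add ((memL1_div hm hpos u).toLp _) ((memL1_div hm hpos v).toLp _),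
      (wd_ae_iff hm hpos).2 (Lp.coeFn_add u v)] with z hu hv huv hadd hadd'
    rw [huv, hadd, Pi.add_apply, hu, hv, hadd', Pi.add_apply, add_div]
  map_smul' := by
    intro r u
    ext1
    filter_upwards [(memL1_div hm hpos u).coeFn_toLp, (memL1_div hm hpos (r • u)).coeFn_toLp,
      Lp.coeFn_smul r ((memL1_div hm hpos u).toLp _),
      (wd_ae_iff hm hpos).2 (Lp.coeFn_smul r u)] with z hu hru hsmul hsmul'
    rw [RingHom.id_apply, hru, hsmul, Pi.smul_apply, hu, hsmul', Pi.smul_apply,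
      smul_eq_mul, smul_eq_mul, mul_div_assoc]

/-- Multiplication by a positive weight: `L¹(w·ρ) → L¹(ρ)`. -/
noncomputable def mulLM (hm : Measurable w) (hpos : ∀ z, 0 < w z) :
    Lp ℝ 1 (ρ.withDensity fun z => ENNReal.ofReal (w z)) →ₗ[ℝ] Lp ℝ 1 ρ where
  toFun u := (memL1_mul hm hpos u).toLp _
  map_add' := by
    intro u v
    ext1
    filter_upwards [(memL1_mul hm hpos u).coeFn_toLp, (memL1_mul hm hpos v).coeFn_toLp,
      (memL1_mul hm hpos (u + v)).coeFn_toLp,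
      Lp.coeFn_add ((memL1_mul hm hpos u).toLp _) ((memL1_mul hm hpos v).toLp _),
      (wd_ae_iff hm hpos).1 (Lp.coeFn_add u v)] with z hu hv huv hadd hadd'
    rw [huv, hadd, Pi.add_apply, hu, hv, hadd', Pi.add_apply, mul_add]
  map_smul' := by
    intro r u
    ext1
    filter_upwards [(memL1_mul hm hpos u).coeFn_toLp, (memL1_mul hm hpos (r • u)).coeFn_toLp,
      Lp.coeFn_smul r ((memL1_mul hm hpos u).toLp _),
      (wd_ae_iff hm hpos).1 (Lp.coeFn_smul r u)] with z hu hru hsmul hsmul'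
    rw [RingHom.id_apply, hru, hsmul, Pi.smul_apply, hu, hsmul', Pi.smul_apply,
      smul_eq_mul, smul_eq_mul]
    ring

lemma divLM_coeFn (hm : Measurable w) (hpos : ∀ z, 0 < w z) (v : Lp ℝ 1 ρ) :
    (divLM hm hpos v : Z → ℝ)
      =ᵐ[ρ.withDensity fun z => ENNReal.ofReal (w z)] fun z => v z / w z :=
  (memL1_div hm hpos v).coeFn_toLp

lemma mulLM_coeFn (hm : Measurable w) (hpos : ∀ z, 0 < w z)
    (u : Lp ℝ 1 (ρ.withDensity fun z => ENNReal.ofReal (w z))) :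
    (mulLM hm hpos u : Z → ℝ) =ᵐ[ρ] fun z => w z * u z :=
  (memL1_mul hm hpos u).coeFn_toLp

lemma divLM_nonneg (hm : Measurable w) (hpos : ∀ z, 0 < w z) (v : Lp ℝ 1 ρ)
    (hv : 0 ≤ v) : 0 ≤ divLM hm hpos v := by
  rw [← Lp.coeFn_nonneg] at hv ⊢
  filter_upwards [divLM_coeFn hm hpos v, (wd_ae_iff hm hpos).2 hv] with z h1 h2
  rw [h1]
  exact div_nonneg h2 (hpos z).le

lemma mulLM_nonneg (hm : Measurable w) (hpos : ∀ z, 0 < w z)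
    (u : Lp ℝ 1 (ρ.withDensity fun z => ENNReal.ofReal (w z)))
    (hu : 0 ≤ u) : 0 ≤ mulLM hm hpos u := by
  rw [← Lp.coeFn_nonneg] at hu ⊢
  filter_upwards [mulLM_coeFn hm hpos u, (wd_ae_iff hm hpos).1 hu] with z h1 h2
  rw [h1]
  exact mul_nonneg (hpos z).le h2

lemma divLM_integral (hm : Measurable w) (hpos : ∀ z, 0 < w z) (v : Lp ℝ 1 ρ) :
    ∫ z, divLM hm hpos v z ∂(ρ.withDensity fun z => ENNReal.ofReal (w z)) = ∫ z, v z ∂ρ := by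
  rw [integral_congr_ae (divLM_coeFn hm hpos v), integral_wd hm hpos]
  refine integral_congr_ae (Filter.Eventually.of_forall fun z => ?_)
  show w z * ((v : Z → ℝ) z / w z) = (v : Z → ℝ) z
  rw [mul_div_cancel₀ _ (hpos z).ne']

lemma mulLM_integral (hm : Measurable w) (hpos : ∀ z, 0 < w z)
    (u : Lp ℝ 1 (ρ.withDensity fun z => ENNReal.ofReal (w z))) :
    ∫ z, mulLM hm hpos u z ∂ρ = ∫ z, u z ∂(ρ.withDensity fun z => ENNReal.ofReal (w z)) := by
  rw [integral_congr_ae (mulLM_coeFn hm hpos u), integral_wd hm hpos]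

end Aux

theorem matrix_maj_with_weights_iff_multivariate_maj
    {n : ℕ} {X Y : Type*} [MeasurableSpace X] [MeasurableSpace Y]
    (μ : Measure X) (ν : Measure Y) [IsFiniteMeasure μ] [IsFiniteMeasure ν]
    (f : Fin n → X → ℝ) (hf : ∀ i, Integrable (f i) μ)
    (g : Fin n → Y → ℝ) (hg : ∀ i, Integrable (g i) ν)
    (h : X → ℝ) (hhm : Measurable h) (hh : Integrable h μ) (hhpos : ∀ x, 0 < h x)
    (k : Y → ℝ) (hkm : Measurable k) (hk : Integrable k ν) (hkpos : ∀ y, 0 < k y) :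
    -- (1) a stochastic operator mapping each gᵢ to fᵢ and k to h
    (∃ S : Lp ℝ 1 ν →ₗ[ℝ] Lp ℝ 1 μ,
      (∀ u : Lp ℝ 1 ν, 0 ≤ u → 0 ≤ S u) ∧
      (∀ u : Lp ℝ 1 ν, ∫ x, S u x ∂μ = ∫ y, u y ∂ν) ∧
      (∀ i, ∀ u : Lp ℝ 1 ν, (u : Y → ℝ) =ᵐ[ν] g i → (S u : X → ℝ) =ᵐ[μ] f i) ∧
      (∀ u : Lp ℝ 1 ν, (u : Y → ℝ) =ᵐ[ν] k → (S u : X → ℝ) =ᵐ[μ] h))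
    ↔
    -- (2) a doubly stochastic operator between the weighted spaces
    -- mapping each gᵢ/k to fᵢ/h, where α = h dμ and β = k dν
    (∃ D : Lp ℝ 1 (ν.withDensity fun y => ENNReal.ofReal (k y)) →ₗ[ℝ]
          Lp ℝ 1 (μ.withDensity fun x => ENNReal.ofReal (h x)),
      (∀ u, 0 ≤ u → 0 ≤ D u) ∧
      (∀ u, ∫ x, D u x ∂(μ.withDensity fun x => ENNReal.ofReal (h x)) =
            ∫ y, u y ∂(ν.withDensity fun y => ENNReal.ofReal (k y))) ∧
      (∀ u : Lp ℝ 1 (ν.withDensity fun y => ENNReal.ofReal (k y)),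
        (u : Y → ℝ) =ᵐ[ν.withDensity fun y => ENNReal.ofReal (k y)] (fun _ => (1 : ℝ)) →
        (D u : X → ℝ) =ᵐ[μ.withDensity fun x => ENNReal.ofReal (h x)] fun _ => (1 : ℝ)) ∧
      (∀ i, ∀ u : Lp ℝ 1 (ν.withDensity fun y => ENNReal.ofReal (k y)),
        (u : Y → ℝ) =ᵐ[ν.withDensity fun y => ENNReal.ofReal (k y)]
            (fun y => g i y / k y) →
        (D u : X → ℝ) =ᵐ[μ.withDensity fun x => ENNReal.ofReal (h x)]
            fun x => f i x / h x)) := by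
  constructor
  · rintro ⟨S, hSpos, hSint, hSg, hSk⟩
    refine ⟨(divLM hhm hhpos).comp (S.comp (mulLM hkm hkpos)), ?_, ?_, ?_, ?_⟩
    · intro u hu
      exact divLM_nonneg hhm hhpos _ (hSpos _ (mulLM_nonneg hkm hkpos u hu))
    · intro u
      simp only [LinearMap.comp_apply]
      rw [divLM_integral hhm hhpos, hSint, mulLM_integral hkm hkpos]
    · intro u hu
      simp only [LinearMap.comp_apply]
      have h1 : (mulLM hkm hkpos u : Y → ℝ) =ᵐ[ν] k := by
        filter_upwards [mulLM_coeFn hkm hkpos u, (wd_ae_iff hkm hkpos).1 hu] with y hy hy'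
        rw [hy, hy', mul_one]
      have h2 := hSk _ h1
      filter_upwards [divLM_coeFn hhm hhpos (S (mulLM hkm hkpos u)),
        (wd_ae_iff hhm hhpos).2 h2] with x hx hx'
      rw [hx, hx', div_self (hhpos x).ne']
    · intro i u hu
      simp only [LinearMap.comp_apply]
      have h1 : (mulLM hkm hkpos u : Y → ℝ) =ᵐ[ν] g i := by
        filter_upwards [mulLM_coeFn hkm hkpos u, (wd_ae_iff hkm hkpos).1 hu] with y hy hy'
        rw [hy, hy', mul_div_cancel₀ _ (hkpos y).ne']
      have h2 := hSg i _ h1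
      filter_upwards [divLM_coeFn hhm hhpos (S (mulLM hkm hkpos u)),
        (wd_ae_iff hhm hhpos).2 h2] with x hx hx'
      rw [hx, hx']
  · rintro ⟨D, hDpos, hDint, hD1, hDg⟩
    refine ⟨(mulLM hhm hhpos).comp (D.comp (divLM hkm hkpos)), ?_, ?_, ?_, ?_⟩
    · intro u hu
      exact mulLM_nonneg hhm hhpos _ (hDpos _ (divLM_nonneg hkm hkpos u hu))
    · intro u
      simp only [LinearMap.comp_apply]
      rw [mulLM_integral hhm hhpos, hDint, divLM_integral hkm hkpos]
    · intro i u hu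
      simp only [LinearMap.comp_apply]
      have h1 : (divLM hkm hkpos u : Y → ℝ)
          =ᵐ[ν.withDensity fun y => ENNReal.ofReal (k y)] fun y => g i y / k y := by
        filter_upwards [divLM_coeFn hkm hkpos u, (wd_ae_iff hkm hkpos).2 hu] with y hy hy'
        rw [hy, hy']
      have h2 := hDg i _ h1
      filter_upwards [mulLM_coeFn hhm hhpos (D (divLM hkm hkpos u)),
        (wd_ae_iff hhm hhpos).1 h2] with x hx hx'
      rw [hx, hx', mul_div_cancel₀ _ (hhpos x).ne']
    · intro u hu
      simp only [LinearMap.comp_apply]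
      have h1 : (divLM hkm hkpos u : Y → ℝ)
          =ᵐ[ν.withDensity fun y => ENNReal.ofReal (k y)] fun _ => (1 : ℝ) := by
        filter_upwards [divLM_coeFn hkm hkpos u, (wd_ae_iff hkm hkpos).2 hu] with y hy hy'
        rw [hy, hy', div_self (hkpos y).ne']
      have h2 := hD1 _ h1
      filter_upwards [mulLM_coeFn hhm hhpos (D (divLM hkm hkpos u)),
        (wd_ae_iff hhm hhpos).1 h2] with x hx hx'
      rw [hx, hx', mul_one]
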